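/- For a Count-Min-Sketch with width w whose hash functions are drawn uniformly at random from a pairwise independent family, for any fixed index i and any row j, the expected overcount satisfies E[C(j,h_j(i)) − v_i] ≤ ‖v‖₁ / w. -/
import Mathlib


/-- For a CMS whose hash functions come from a pairwise independent family
(`Pr[h_j(i') = h_j(i)] ≤ 1/w` for `i' ≠ i`), the expected overcount of the row
estimate satisfies `E[C(j, h_j(i)) - v_i] ≤ ‖v‖₁ / w`. The randomness is modeled
by a finite probability space `(Ω, μ)` over which the hash function `H` is drawn. -/
theorem cms_expected_overcount {Ω I B : Type*} [Fintype Ω] [Fintype I] [DecidableEq I]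
    [DecidableEq B]
    (μ : Ω → ℝ) (hμ0 : ∀ ω, 0 ≤ μ ω) (hμ1 : ∑ ω, μ ω = 1)
    (H : Ω → I → B) (v : I → ℝ) (hv : ∀ i, 0 ≤ v i)
    (w : ℕ) (hw : 0 < w) (i : I)
    (hpair : ∀ i', i' ≠ i →
      ∑ ω ∈ Finset.univ.filter (fun ω => H ω i' = H ω i), μ ω ≤ 1 / w) :
    ∑ ω, μ ω * (∑ i' ∈ Finset.univ.filter (fun i' => i' ≠ i ∧ H ω i' = H ω i), v i')
      ≤ (∑ i', v i') / w := by
  have key : ∑ ω, μ ω * (∑ i' ∈ Finset.univ.filter (fun i' => i' ≠ i ∧ H ω i' = H ω i), v i')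
      = ∑ i' ∈ Finset.univ.filter (fun i' => i' ≠ i),
          v i' * ∑ ω ∈ Finset.univ.filter (fun ω => H ω i' = H ω i), μ ω := by
    simp only [Finset.mul_sum, Finset.sum_filter]
    rw [Finset.sum_comm]
    apply Finset.sum_congr rfl
    intro i' _
    by_cases h1 : i' ≠ i
    · rw [if_pos h1]
      apply Finset.sum_congr rfl
      intro ω _
      by_cases h2 : H ω i' = H ω i <;> simp [h1, h2, mul_comm]
    · simp [h1]
  rw [key]
  calc ∑ i' ∈ Finset.univ.filter (fun i' => i' ≠ i),
          v i' * ∑ ω ∈ Finset.univ.filter (fun ω => H ω i' = H ω i), μ ω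
      ≤ ∑ i' ∈ Finset.univ.filter (fun i' => i' ≠ i), v i' * (1 / w) := by
        apply Finset.sum_le_sum
        intro i' hi'
        exact mul_le_mul_of_nonneg_left (hpair i' (Finset.mem_filter.mp hi').2) (hv i')
    _ ≤ ∑ i', v i' * (1 / w) := by
        apply Finset.sum_le_sum_of_subset_of_nonneg (Finset.filter_subset _ _)
        intro j _ _
        have := hv j
        have : (0:ℝ) ≤ 1 / w := by positivity
        positivity
    _ = (∑ i', v i') / w := by rw [← Finset.sum_mul]; ring
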